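/- Let f be a monic polynomial of degree d ≥ 1 with simple (distinct) zeros z_1, …, z_d, all satisfying |z_i| ≥ 1, and let g be a complex polynomial of degree at most d. Then there exists a constant C = C(g, d, ω) > 0 such that for all n ≥ deg(g), the minimum over polynomials p of degree at most n of ‖g − p f‖²_ω is at most C · (∑_{k=0}^n 1/ω_k)^{-1}. -/

import Mathlib

/-- The squared weighted `H²_ω` norm of a polynomial `g = ∑ a_k z^k`,
namely `∑_k |a_k|² ω_k`. -/
noncomputable def wnormSq (ω : ℕ → ℝ) (g : Polynomial ℂ) : ℝ :=
  ∑ k ∈ Finset.range (g.natDegree + 1), ‖g.coeff k‖ ^ 2 * ω k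

open Polynomial Finset

lemma wnormSq_eq_range (ω : ℕ → ℝ) (h : Polynomial ℂ) {N : ℕ} (hN : h.natDegree < N) :
    wnormSq ω h = ∑ k ∈ Finset.range N, ‖h.coeff k‖ ^ 2 * ω k := by
  apply Finset.sum_subset (Finset.range_subset_range.2 hN)
  intro k _ hk
  rw [Polynomial.coeff_eq_zero_of_natDegree_lt (by simpa using hk)]
  simp

lemma wnormSq_nonneg (ω : ℕ → ℝ) (hω : ∀ k, 0 ≤ ω k) (h : Polynomial ℂ) : 0 ≤ wnormSq ω h :=
  Finset.sum_nonneg fun k _ => mul_nonneg (by positivity) (hω k)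

lemma wnormSq_sum_le (ω : ℕ → ℝ) (hω : ∀ k, 0 ≤ ω k) {ι : Type*} (s : Finset ι)
    (q : ι → Polynomial ℂ) :
    wnormSq ω (∑ i ∈ s, q i) ≤ s.card * ∑ i ∈ s, wnormSq ω (q i) := by
  set N := (s.sup fun i => (q i).natDegree) + 1 with hNdef
  have hdeg : ∀ i ∈ s, (q i).natDegree < N := fun i hi =>
    Nat.lt_succ_of_le (Finset.le_sup (f := fun i => (q i).natDegree) hi)
  have hsum : (∑ i ∈ s, q i).natDegree < N :=
    Nat.lt_succ_of_le (Polynomial.natDegree_sum_le_of_forall_le s q fun i hi => Finset.le_sup (f := fun i => (q i).natDegree) hi)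
  rw [wnormSq_eq_range ω _ hsum]
  have hr : ∀ i ∈ s, wnormSq ω (q i) = ∑ k ∈ Finset.range N, ‖(q i).coeff k‖ ^ 2 * ω k :=
    fun i hi => wnormSq_eq_range ω _ (hdeg i hi)
  rw [Finset.sum_congr rfl hr]
  calc ∑ k ∈ Finset.range N, ‖(∑ i ∈ s, q i).coeff k‖ ^ 2 * ω k
      ≤ ∑ k ∈ Finset.range N, (s.card * ∑ i ∈ s, ‖(q i).coeff k‖ ^ 2) * ω k := by
        apply Finset.sum_le_sum
        intro k _
        apply mul_le_mul_of_nonneg_right _ (hω k)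
        rw [Polynomial.finset_sum_coeff]
        calc ‖∑ i ∈ s, (q i).coeff k‖ ^ 2 ≤ (∑ i ∈ s, ‖(q i).coeff k‖) ^ 2 := by
              apply pow_le_pow_left₀ (norm_nonneg _) (norm_sum_le _ _)
          _ ≤ s.card * ∑ i ∈ s, ‖(q i).coeff k‖ ^ 2 := sq_sum_le_card_mul_sum_sq
    _ = s.card * ∑ i ∈ s, ∑ k ∈ Finset.range N, ‖(q i).coeff k‖ ^ 2 * ω k := by
        simp_rw [Finset.mul_sum, Finset.sum_mul]
        rw [Finset.sum_comm]
        simp_rw [mul_assoc]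

lemma wnormSq_mul_X_le (ω : ℕ → ℝ) (M : ℝ) (hω : ∀ k, 0 ≤ ω k) (hM0 : 0 ≤ M)
    (hM : ∀ k, ω (k + 1) ≤ M * ω k) (h : Polynomial ℂ) :
    wnormSq ω (h * Polynomial.X) ≤ M * wnormSq ω h := by
  set N := h.natDegree + 1 with hN
  have h1 : (h * Polynomial.X).natDegree < N + 1 := by
    have := Polynomial.natDegree_mul_le (p := h) (q := Polynomial.X)
    simp only [Polynomial.natDegree_X] at this
    omega
  rw [wnormSq_eq_range ω _ h1, Finset.sum_range_succ']
  have c0 : (h * Polynomial.X).coeff 0 = 0 := by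
    rw [Polynomial.mul_coeff_zero]; simp
  rw [c0]
  simp only [Polynomial.coeff_mul_X, norm_zero]
  rw [show (0:ℝ) ^ 2 * ω 0 = 0 by norm_num, add_zero]
  rw [wnormSq_eq_range ω h (Nat.lt_succ_self _), Finset.mul_sum]
  apply Finset.sum_le_sum
  intro k _
  calc ‖h.coeff k‖ ^ 2 * ω (k + 1) ≤ ‖h.coeff k‖ ^ 2 * (M * ω k) :=
        mul_le_mul_of_nonneg_left (hM k) (by positivity)
    _ = M * (‖h.coeff k‖ ^ 2 * ω k) := by ring

lemma wnormSq_mul_X_pow_le (ω : ℕ → ℝ) (M : ℝ) (hω : ∀ k, 0 ≤ ω k) (hM0 : 0 ≤ M)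
    (hM : ∀ k, ω (k + 1) ≤ M * ω k) (h : Polynomial ℂ) (j : ℕ) :
    wnormSq ω (h * Polynomial.X ^ j) ≤ M ^ j * wnormSq ω h := by
  induction j with
  | zero => simp
  | succ j ih =>
      have : h * Polynomial.X ^ (j + 1) = (h * Polynomial.X ^ j) * Polynomial.X := by ring
      rw [this]
      calc wnormSq ω (h * Polynomial.X ^ j * Polynomial.X)
          ≤ M * wnormSq ω (h * Polynomial.X ^ j) := wnormSq_mul_X_le ω M hω hM0 hM _
        _ ≤ M * (M ^ j * wnormSq ω h) := mul_le_mul_of_nonneg_left ih hM0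
        _ = M ^ (j + 1) * wnormSq ω h := by ring

lemma wnormSq_C_mul_le (ω : ℕ → ℝ) (hω : ∀ k, 0 ≤ ω k) (a : ℂ) (h : Polynomial ℂ) :
    wnormSq ω (Polynomial.C a * h) ≤ ‖a‖ ^ 2 * wnormSq ω h := by
  have hd : (Polynomial.C a * h).natDegree < h.natDegree + 1 :=
    Nat.lt_succ_of_le (Polynomial.natDegree_C_mul_le a h)
  rw [wnormSq_eq_range ω _ hd, wnormSq_eq_range ω h (Nat.lt_succ_self _), Finset.mul_sum]
  apply Finset.sum_le_sum
  intro k _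
  rw [Polynomial.coeff_C_mul, norm_mul, mul_pow]
  rw [mul_assoc]

/-- multiplication by a fixed polynomial. -/
lemma wnormSq_fixed_mul_le (ω : ℕ → ℝ) (M : ℝ) (hω : ∀ k, 0 ≤ ω k) (hM0 : 0 ≤ M)
    (hM : ∀ k, ω (k + 1) ≤ M * ω k) (B : Polynomial ℂ) (h : Polynomial ℂ) :
    wnormSq ω (B * h) ≤
      ((B.natDegree + 1) * ∑ j ∈ Finset.range (B.natDegree + 1), ‖B.coeff j‖ ^ 2 * M ^ j)
        * wnormSq ω h := by
  have hB : B * h = ∑ j ∈ Finset.range (B.natDegree + 1),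
      Polynomial.C (B.coeff j) * (h * Polynomial.X ^ j) := by
    conv_lhs => rw [Polynomial.as_sum_range' B (B.natDegree + 1) (Nat.lt_succ_self _)]
    rw [Finset.sum_mul]
    congr 1; ext j
    rw [← Polynomial.C_mul_X_pow_eq_monomial]; ring
  rw [hB]
  calc wnormSq ω (∑ j ∈ Finset.range (B.natDegree + 1),
          Polynomial.C (B.coeff j) * (h * Polynomial.X ^ j))
      ≤ (Finset.range (B.natDegree + 1)).card * ∑ j ∈ Finset.range (B.natDegree + 1),
          wnormSq ω (Polynomial.C (B.coeff j) * (h * Polynomial.X ^ j)) :=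
        wnormSq_sum_le ω hω _ _
    _ ≤ (B.natDegree + 1) * ∑ j ∈ Finset.range (B.natDegree + 1),
          ‖B.coeff j‖ ^ 2 * M ^ j * wnormSq ω h := by
        rw [Finset.card_range]
        push_cast
        apply mul_le_mul_of_nonneg_left _ (by positivity)
        apply Finset.sum_le_sum
        intro j _
        calc wnormSq ω (Polynomial.C (B.coeff j) * (h * Polynomial.X ^ j))
            ≤ ‖B.coeff j‖ ^ 2 * wnormSq ω (h * Polynomial.X ^ j) := wnormSq_C_mul_le ω hω _ _
          _ ≤ ‖B.coeff j‖ ^ 2 * (M ^ j * wnormSq ω h) := by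
              apply mul_le_mul_of_nonneg_left (wnormSq_mul_X_pow_le ω M hω hM0 hM h j)
              positivity
          _ = ‖B.coeff j‖ ^ 2 * M ^ j * wnormSq ω h := by ring
    _ = ((B.natDegree + 1) * ∑ j ∈ Finset.range (B.natDegree + 1), ‖B.coeff j‖ ^ 2 * M ^ j)
          * wnormSq ω h := by
        rw [← Finset.sum_mul]; ring

/-- existence of a ratio bound from the limit assumption. -/
lemma ratio_bound (ω : ℕ → ℝ) (hωpos : ∀ k, 0 < ω k)
    (hωlim : Filter.Tendsto (fun k => ω k / ω (k + 1)) Filter.atTop (nhds 1)) :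
    ∃ M : ℝ, 0 ≤ M ∧ ∀ k, ω (k + 1) ≤ M * ω k := by
  have hev : ∀ᶠ k in Filter.atTop, (1 : ℝ) / 2 < ω k / ω (k + 1) :=
    hωlim.eventually (eventually_gt_nhds (by norm_num))
  obtain ⟨K, hK⟩ := hev.exists_forall_of_atTop
  have hsumK : (0:ℝ) ≤ ∑ j ∈ Finset.range K, ω (j + 1) / ω j :=
    Finset.sum_nonneg fun j _ => le_of_lt (div_pos (hωpos _) (hωpos _))
  refine ⟨2 + ∑ j ∈ Finset.range K, ω (j + 1) / ω j, by linarith, ?_⟩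
  intro k
  by_cases hk : K ≤ k
  · have h2 := hK k hk
    have hp := hωpos (k + 1)
    have : ω (k + 1) ≤ 2 * ω k := by
      rw [div_lt_div_iff₀ (by norm_num) hp] at h2
      linarith
    have hsum : (0:ℝ) ≤ ∑ j ∈ Finset.range K, ω (j + 1) / ω j :=
      Finset.sum_nonneg fun j _ => le_of_lt (div_pos (hωpos _) (hωpos _))
    nlinarith [hωpos k]
  · push_neg at hk
    have hterm : ω (k + 1) / ω k ≤ ∑ j ∈ Finset.range K, ω (j + 1) / ω j :=
      Finset.single_le_sum (f := fun j => ω (j + 1) / ω j)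
        (fun j _ => le_of_lt (div_pos (hωpos _) (hωpos _))) (Finset.mem_range.2 hk)
    have hp := hωpos k
    rw [div_le_iff₀ hp] at hterm
    nlinarith [hωpos (k+1)]

/-- the reproducing-kernel extremal polynomial. -/
lemma kernel_exists (ω : ℕ → ℝ) (hωpos : ∀ k, 0 < ω k) (z : ℂ) (hz : 1 ≤ ‖z‖) (n : ℕ) :
    ∃ r : Polynomial ℂ, r.natDegree ≤ n ∧ r.eval z = 1 ∧
      wnormSq ω r ≤ (∑ k ∈ Finset.range (n + 1), (ω k)⁻¹)⁻¹ := by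
  set S : ℝ := ∑ k ∈ Finset.range (n + 1), (‖z‖ ^ 2) ^ k / ω k with hS
  have hSpos : 0 < S := Finset.sum_pos (fun k _ => div_pos (by positivity) (hωpos k))
    (Finset.nonempty_range_add_one)
  set r : Polynomial ℂ := Polynomial.C ((S : ℂ))⁻¹ *
    ∑ k ∈ Finset.range (n + 1),
      Polynomial.C ((starRingEnd ℂ) z ^ k * ((ω k : ℝ) : ℂ)⁻¹) * Polynomial.X ^ k with hr
  have hcoeff : ∀ m : ℕ, r.coeff m =
      if m ∈ Finset.range (n + 1) then ((S : ℂ))⁻¹ * ((starRingEnd ℂ) z ^ m * ((ω m : ℝ) : ℂ)⁻¹)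
      else 0 := by
    intro m
    rw [hr, Polynomial.coeff_C_mul, Polynomial.finset_sum_coeff]
    simp_rw [Polynomial.coeff_C_mul, Polynomial.coeff_X_pow]
    simp [mul_ite, Finset.sum_ite_eq]
  have hdeg : r.natDegree ≤ n := by
    apply le_trans (Polynomial.natDegree_C_mul_le _ _)
    apply Polynomial.natDegree_sum_le_of_forall_le
    intro k hk
    apply le_trans (Polynomial.natDegree_C_mul_le _ _)
    simpa using Nat.lt_succ_iff.mp (Finset.mem_range.mp hk)
  have hzz : z * (starRingEnd ℂ) z = ((‖z‖ ^ 2 : ℝ) : ℂ) := by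
    rw [RCLike.mul_conj]
    norm_cast
  have heval : r.eval z = 1 := by
    rw [hr]
    simp only [Polynomial.eval_mul, Polynomial.eval_C, Polynomial.eval_finset_sum,
      Polynomial.eval_mul, Polynomial.eval_pow, Polynomial.eval_X]
    have : ∑ k ∈ Finset.range (n + 1), (starRingEnd ℂ) z ^ k * ((ω k : ℝ) : ℂ)⁻¹ * z ^ k
        = (S : ℂ) := by
      rw [hS]
      push_cast
      apply Finset.sum_congr rfl
      intro k _
      rw [div_eq_mul_inv]
      have hzk : (starRingEnd ℂ) z ^ k * z ^ k = (((‖z‖ : ℂ)) ^ 2) ^ k := by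
        rw [← mul_pow, mul_comm, hzz]
        push_cast
        ring
      linear_combination ((ω k : ℝ) : ℂ)⁻¹ * hzk
    rw [this, inv_mul_cancel₀]
    exact_mod_cast hSpos.ne'
  refine ⟨r, hdeg, heval, ?_⟩
  rw [wnormSq_eq_range ω r (Nat.lt_succ_of_le hdeg)]
  have hTpos : 0 < ∑ k ∈ Finset.range (n + 1), (ω k)⁻¹ :=
    Finset.sum_pos (fun k _ => inv_pos.2 (hωpos k)) Finset.nonempty_range_add_one
  calc ∑ m ∈ Finset.range (n + 1), ‖r.coeff m‖ ^ 2 * ω m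
      = ∑ m ∈ Finset.range (n + 1), S⁻¹ * S⁻¹ * ((‖z‖ ^ 2) ^ m / ω m) := by
        apply Finset.sum_congr rfl
        intro m hm
        rw [hcoeff m, if_pos hm]
        have h1 : ‖((S : ℝ) : ℂ)⁻¹‖ = S⁻¹ := by
          rw [norm_inv, Complex.norm_real, Real.norm_eq_abs, abs_of_pos hSpos]
        have h2 : ‖(starRingEnd ℂ) z ^ m‖ = ‖z‖ ^ m := by
          rw [norm_pow, RCLike.norm_conj]
        have h3 : ‖((ω m : ℝ) : ℂ)⁻¹‖ = (ω m)⁻¹ := by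
          rw [norm_inv, Complex.norm_real, Real.norm_eq_abs, abs_of_pos (hωpos m)]
        rw [norm_mul, norm_mul, h1, h2, h3]
        have := (hωpos m).ne'
        field_simp
        ring
    _ = S⁻¹ * S⁻¹ * S := by rw [← Finset.mul_sum, ← hS]
    _ = S⁻¹ := by field_simp
    _ ≤ (∑ k ∈ Finset.range (n + 1), (ω k)⁻¹)⁻¹ := by
        apply inv_anti₀ hTpos
        apply Finset.sum_le_sum
        intro k _
        have h1k : (1 : ℝ) ≤ (‖z‖ ^ 2) ^ k := one_le_pow₀ (by nlinarith)
        rw [inv_eq_one_div]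
        gcongr
        exact (hωpos k).le

lemma factor_root (r : Polynomial ℂ) (z : ℂ) (hr : r.eval z = 1) {n : ℕ} (hdeg : r.natDegree ≤ n) :
    ∃ p : Polynomial ℂ, 1 - (Polynomial.X - Polynomial.C z) * p = r ∧ p.natDegree ≤ n := by
  have hroot : (1 - r).IsRoot z := by simp [Polynomial.IsRoot, hr]
  obtain ⟨p, hp⟩ := Polynomial.dvd_iff_isRoot.2 hroot
  refine ⟨p, by rw [← hp]; ring, ?_⟩
  by_cases hp0 : p = 0
  · simp [hp0]
  have h1r : (1 - r).natDegree ≤ n := by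
    apply le_trans (Polynomial.natDegree_sub_le _ _)
    simpa using hdeg
  rw [hp, Polynomial.natDegree_mul (Polynomial.X_sub_C_ne_zero z) hp0,
    Polynomial.natDegree_X_sub_C] at h1r
  omega

theorem stmt2
    (ω : ℕ → ℝ) (hω0 : ω 0 = 1) (hωpos : ∀ k, 0 < ω k)
    (hωlim : Filter.Tendsto (fun k => ω k / ω (k + 1)) Filter.atTop (nhds 1))
    (d : ℕ) (hd : 0 < d) (z : Fin d → ℂ)
    (hzinj : Function.Injective z) (hz : ∀ i, 1 ≤ ‖z i‖)
    (f : Polynomial ℂ) (hf : f = ∏ i, (Polynomial.X - Polynomial.C (z i)))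
    (g : Polynomial ℂ) (hgd : g.natDegree ≤ d) :
    ∃ C : ℝ, 0 < C ∧ ∀ n : ℕ, g.natDegree ≤ n →
      ∃ p : Polynomial ℂ, p.natDegree ≤ n ∧
        wnormSq ω (g - p * f) ≤ C * (∑ k ∈ Finset.range (n + 1), (ω k)⁻¹)⁻¹ := by
  obtain ⟨M, hM0, hM⟩ := ratio_bound ω hωpos hωlim
  have hωnn : ∀ k, 0 ≤ ω k := fun k => (hωpos k).le
  -- basic facts about f
  have hfmonic : f.Monic := by
    rw [hf]; exact monic_prod_of_monic _ _ fun i _ => Polynomial.monic_X_sub_C _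
  have hfdeg : f.natDegree = d := by
    rw [hf, Polynomial.natDegree_prod _ _ fun i _ => Polynomial.X_sub_C_ne_zero _]
    simp [Polynomial.natDegree_X_sub_C]
  -- the decomposition data
  set c : ℂ := g.coeff d with hc
  set h : Polynomial ℂ := g - Polynomial.C c * f with hh
  have hdegh : h.degree < (d : ℕ) := by
    rw [Polynomial.degree_lt_iff_coeff_zero]
    intro m hm
    have hm' : d ≤ m := by exact_mod_cast hm
    rw [hh, Polynomial.coeff_sub, Polynomial.coeff_C_mul]
    rcases eq_or_lt_of_le hm' with heq | hlt
    · have : f.coeff m = 1 := by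
        rw [← heq, ← hfdeg]; exact hfmonic.coeff_natDegree
      rw [this, ← heq, ← hc]; ring
    · have h1 : g.coeff m = 0 := Polynomial.coeff_eq_zero_of_natDegree_lt (lt_of_le_of_lt hgd hlt)
      have h2 : f.coeff m = 0 := Polynomial.coeff_eq_zero_of_natDegree_lt (hfdeg ▸ hlt)
      rw [h1, h2]; ring
  have hinj : Set.InjOn z ↑(Finset.univ : Finset (Fin d)) := fun a _ b _ hab => hzinj hab
  set F : Fin d → Polynomial ℂ :=
    fun i => ∏ j ∈ Finset.univ.erase i, (Polynomial.X - Polynomial.C (z j)) with hF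
  set e : Fin d → ℂ := fun i => ∏ j ∈ Finset.univ.erase i, (z i - z j)⁻¹ with he
  set b : Fin d → ℂ := fun i => h.eval (z i) with hb
  have hbasis : ∀ i, Lagrange.basis Finset.univ z i = Polynomial.C (e i) * F i := by
    intro i
    rw [Lagrange.basis]
    simp_rw [Lagrange.basisDivisor]
    rw [Finset.prod_mul_distrib, ← map_prod]
  have hfF : ∀ i, f = (Polynomial.X - Polynomial.C (z i)) * F i := by
    intro i
    rw [hf, hF, ← Finset.mul_prod_erase _ _ (Finset.mem_univ i)]
  have hdecomp : g = Polynomial.C c * f + ∑ i, Polynomial.C (b i) * (Polynomial.C (e i) * F i) := by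
    have hcard : h.degree < ((Finset.univ : Finset (Fin d)).card : ℕ) := by
      rwa [Finset.card_univ, Fintype.card_fin]
    have h2 : h = ∑ i, Polynomial.C (b i) * (Polynomial.C (e i) * F i) := by
      have h3 := Lagrange.eq_interpolate (v := z) (s := Finset.univ) hinj hcard
      rw [Lagrange.interpolate_apply] at h3
      rw [h3]
      apply Finset.sum_congr rfl
      intro i _
      rw [hbasis i]
    calc g = Polynomial.C c * f + h := by rw [hh]; ring
      _ = _ := by rw [h2]
  -- the fixed multiplier polynomials and constants
  set A : Fin d → Polynomial ℂ := fun i => Polynomial.C (b i * e i) * F i with hA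
  set D : Fin d → ℝ := fun i => ((A i).natDegree + 1) *
    ∑ j ∈ Finset.range ((A i).natDegree + 1), ‖(A i).coeff j‖ ^ 2 * M ^ j with hD
  have hDnn : ∀ i, 0 ≤ D i := by
    intro i
    apply mul_nonneg (by positivity)
    exact Finset.sum_nonneg fun j _ => mul_nonneg (by positivity) (pow_nonneg hM0 j)
  refine ⟨d * ∑ i, D i + 1, by positivity, ?_⟩
  intro n _
  -- kernel polynomials
  choose r hrdeg hreval hrnorm using fun i => kernel_exists ω hωpos (z i) (hz i) n
  choose q hq hqdeg using fun i => factor_root (r i) (z i) (hreval i) (hrdeg i)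
  set p : Polynomial ℂ := Polynomial.C c + ∑ i, Polynomial.C (b i * e i) * q i with hp
  have hpdeg : p.natDegree ≤ n := by
    apply le_trans (Polynomial.natDegree_add_le _ _)
    simp only [Polynomial.natDegree_C, max_le_iff]
    constructor
    · exact Nat.zero_le n
    · apply Polynomial.natDegree_sum_le_of_forall_le
      intro i _
      exact le_trans (Polynomial.natDegree_C_mul_le _ _) (hqdeg i)
  refine ⟨p, hpdeg, ?_⟩
  have key : g - p * f = ∑ i, A i * r i := by
    conv_lhs => rw [hdecomp, hp]
    rw [add_mul, Finset.sum_mul, add_sub_add_left_eq_sub, ← Finset.sum_sub_distrib]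
    apply Finset.sum_congr rfl
    intro i _
    rw [hA]
    simp only
    rw [mul_assoc (Polynomial.C (b i * e i)) (q i) f, hfF i, ← hq i]
    rw [map_mul]
    ring
  rw [key]
  have hTpos : 0 < ∑ k ∈ Finset.range (n + 1), (ω k)⁻¹ :=
    Finset.sum_pos (fun k _ => inv_pos.2 (hωpos k)) Finset.nonempty_range_add_one
  calc wnormSq ω (∑ i, A i * r i)
      ≤ (Finset.univ : Finset (Fin d)).card * ∑ i, wnormSq ω (A i * r i) :=
        wnormSq_sum_le ω hωnn _ _
    _ ≤ d * ∑ i, D i * (∑ k ∈ Finset.range (n + 1), (ω k)⁻¹)⁻¹ := by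
        rw [Finset.card_univ, Fintype.card_fin]
        apply mul_le_mul_of_nonneg_left _ (by positivity)
        apply Finset.sum_le_sum
        intro i _
        calc wnormSq ω (A i * r i) ≤ D i * wnormSq ω (r i) :=
              wnormSq_fixed_mul_le ω M hωnn hM0 hM (A i) (r i)
          _ ≤ D i * (∑ k ∈ Finset.range (n + 1), (ω k)⁻¹)⁻¹ :=
              mul_le_mul_of_nonneg_left (hrnorm i) (hDnn i)
    _ = (d * ∑ i, D i) * (∑ k ∈ Finset.range (n + 1), (ω k)⁻¹)⁻¹ := by
        rw [← Finset.sum_mul]; ring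
    _ ≤ (d * ∑ i, D i + 1) * (∑ k ∈ Finset.range (n + 1), (ω k)⁻¹)⁻¹ := by
        apply mul_le_mul_of_nonneg_right _ (le_of_lt (inv_pos.2 hTpos))
        linarith
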